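/- Let c₁, c₂, c₃, d₁, d₂, d₃ be integers satisfying (c₁d₂ − c₂d₁)(c₁d₃ − c₃d₁)(c₂d₃ − c₃d₂) ≠ 0, and write λ_j = c_j α + d_j β for j = 1, 2, 3. There is a constant C (depending only on c₁,…,d₃) such that for all large real P, all R with 1 ≤ R ≤ P, and every subset ℬ ⊆ [P/2, P] ∩ ℤ, one has ∫₀¹∫₀¹ ∏_{i=1}^{3} |F(λ_i; ℬ)² h(λ_i; P, R)²| dα dβ ≤ C · Σ_{|k|≤2P³} R(k)³, where R(k) denotes the number of quadruples (x₁, x₂, x₃, x₄) with P/2 ≤ x₁, x₂ ≤ P integers, x₃, x₄ ∈ 𝒜(P, R), and x₁³ − x₂³ + x₃³ − x₄³ = k. -/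

import Mathlib

open Filter MeasureTheory
open scoped Classical

noncomputable section

/-- `e(z) = exp(2πiz)`. -/
def ee (z : ℝ) : ℂ := Complex.exp (2 * Real.pi * Complex.I * z)

/-- `τ = (213 − 4√2833)/164`. -/
def tau : ℝ := (213 - 4 * Real.sqrt 2833) / 164

/-- `𝒜(P, R)`: the `R`-smooth numbers in `[1, P]`. -/
def smoothSet (P R : ℝ) : Finset ℕ :=
  (Finset.Icc 1 ⌊P⌋₊).filter fun n : ℕ => ∀ p : ℕ, p.Prime → p ∣ n → (p : ℝ) ≤ R

/-- The smooth Weyl sum `h(θ; P, R)`. -/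
def hsum (P R θ : ℝ) : ℂ := ∑ y ∈ smoothSet P R, ee (θ * (y : ℝ) ^ 3)

/-- The exponential sum `F(θ; ℬ)` over a set `ℬ` of integers. -/
def Fsum (B : Finset ℤ) (θ : ℝ) : ℂ := ∑ x ∈ B, ee (θ * (x : ℝ) ^ 3)

/-- `R(k)`: the number of quadruples `(x₁, x₂, x₃, x₄)` with `P/2 ≤ x₁, x₂ ≤ P` integers,
`x₃, x₄ ∈ 𝒜(P, R)`, and `x₁³ − x₂³ + x₃³ − x₄³ = k`. -/
def Rk (P R : ℝ) (k : ℤ) : ℕ :=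
  Nat.card {x : (ℤ × ℤ) × ℕ × ℕ //
    (P / 2 ≤ (x.1.1 : ℝ) ∧ (x.1.1 : ℝ) ≤ P) ∧ (P / 2 ≤ (x.1.2 : ℝ) ∧ (x.1.2 : ℝ) ≤ P) ∧
      x.2.1 ∈ smoothSet P R ∧ x.2.2 ∈ smoothSet P R ∧
        x.1.1 ^ 3 - x.1.2 ^ 3 + (x.2.1 : ℤ) ^ 3 - (x.2.2 : ℤ) ^ 3 = k}

/-! ### Auxiliary definitions and lemmas -/

lemma ee_add (a b : ℝ) : ee (a + b) = ee a * ee b := by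
  simp only [ee, ← Complex.exp_add]; push_cast; ring_nf

lemma ee_conj (a : ℝ) : (starRingEnd ℂ) (ee a) = ee (-a) := by
  simp only [ee, ← Complex.exp_conj, map_mul, Complex.conj_I, Complex.conj_ofReal, map_ofNat]
  push_cast; ring_nf

lemma ee_cont (a b : ℝ) : Continuous fun x : ℝ => ee (a + x * b) := by
  unfold ee; fun_prop

lemma ee_int_integral (n : ℤ) : (∫ x in (0:ℝ)..1, ee (x * n)) = if n = 0 then 1 else 0 := by
  split_ifs with h
  · simp [h, ee]
  · have hc : (2 * Real.pi * Complex.I * n) ≠ 0 := by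
      simp [Real.pi_ne_zero, Complex.I_ne_zero, h]
    have : (∫ x in (0:ℝ)..1, ee (x * n)) =
        ∫ x in (0:ℝ)..1, Complex.exp ((2 * Real.pi * Complex.I * n) * x) := by
      apply intervalIntegral.integral_congr
      intro x _
      simp only [ee]; push_cast; ring_nf
    rw [this, integral_exp_mul_complex hc]
    have h1 : Complex.exp (2 * Real.pi * Complex.I * n * 1) = 1 := by
      rw [mul_one]
      have := Complex.exp_int_mul_two_pi_mul_I n
      rw [← this]; ring_nf
    push_cast
    rw [h1]
    simp

/-- the quadruple `(y₂, y₁, x₂, x₁)`. -/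
def kap (q : ℕ × ℕ × ℤ × ℤ) : ℤ :=
  q.2.2.2 ^ 3 - q.2.2.1 ^ 3 + (q.2.1 : ℤ) ^ 3 - (q.1 : ℤ) ^ 3

def QSet (P R : ℝ) (B : Finset ℤ) : Finset (ℕ × ℕ × ℤ × ℤ) :=
  smoothSet P R ×ˢ smoothSet P R ×ˢ B ×ˢ B

def MM (v : Fin 3 → ℤ) (t : (ℕ × ℕ × ℤ × ℤ) × (ℕ × ℕ × ℤ × ℤ) × (ℕ × ℕ × ℤ × ℤ)) : ℤ :=
  v 2 * kap t.1 + v 1 * kap t.2.1 + v 0 * kap t.2.2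

lemma expand_lemma (P R θ : ℝ) (B : Finset ℤ) :
    ((‖Fsum B θ‖ ^ 2 * ‖hsum P R θ‖ ^ 2 : ℝ) : ℂ) =
    ∑ q ∈ QSet P R B, ee (θ * (kap q : ℝ)) := by
  have habs : ∀ z : ℂ, ((‖z‖ ^ 2 : ℝ) : ℂ) = z * (starRingEnd ℂ) z := by
    intro z; rw [Complex.mul_conj, Complex.sq_norm]
  rw [Complex.ofReal_mul, habs, habs]
  simp only [Fsum, hsum, map_sum, ee_conj, QSet]
  simp only [Finset.sum_mul, Finset.mul_sum, Finset.sum_product]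
  apply Finset.sum_congr rfl; intro y2 _
  apply Finset.sum_congr rfl; intro y1 _
  apply Finset.sum_congr rfl; intro x2 _
  apply Finset.sum_congr rfl; intro x1 _
  simp only [← ee_add]
  congr 1
  simp only [kap]
  push_cast
  ring

lemma prod_expand (c d : Fin 3 → ℤ) (P R α β : ℝ) (B : Finset ℤ) :
    ((∏ i : Fin 3,
        ‖Fsum B ((c i : ℝ) * α + (d i : ℝ) * β)‖ ^ 2 *
          ‖hsum P R ((c i : ℝ) * α + (d i : ℝ) * β)‖ ^ 2 : ℝ) : ℂ) =
    ∑ t ∈ QSet P R B ×ˢ QSet P R B ×ˢ QSet P R B,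
      ee (α * (MM c t : ℝ) + β * (MM d t : ℝ)) := by
  rw [Complex.ofReal_prod, Fin.prod_univ_three, expand_lemma, expand_lemma, expand_lemma]
  simp only [Finset.sum_mul, Finset.mul_sum, Finset.sum_product]
  apply Finset.sum_congr rfl; intro t1 _
  apply Finset.sum_congr rfl; intro t2 _
  apply Finset.sum_congr rfl; intro t3 _
  simp only [← ee_add]
  congr 1
  simp only [MM]
  push_cast
  ring


lemma amgm3 (a b c : ℝ) (ha : 0 ≤ a) (hb : 0 ≤ b) (hc : 0 ≤ c) :
    a * b * c ≤ (a ^ 3 + b ^ 3 + c ^ 3) / 3 := by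
  nlinarith [mul_nonneg (add_nonneg (add_nonneg ha hb) hc)
    (add_nonneg (add_nonneg (sq_nonneg (a - b)) (sq_nonneg (b - c))) (sq_nonneg (a - c))),
    sq_nonneg (a - b), sq_nonneg (b - c), sq_nonneg (a - c)]

lemma ee_cont' (b : ℝ) : Continuous fun x : ℝ => ee (x * b) := by
  unfold ee; fun_prop

lemma ee_cont2 (a b : ℝ) : Continuous fun x : ℝ => ee (a + x * b) := by
  unfold ee; fun_prop

lemma Rk_eq (P R : ℝ) (k : ℤ) :
    Rk P R k = (((Finset.Icc ⌈P/2⌉ ⌊P⌋ ×ˢ Finset.Icc ⌈P/2⌉ ⌊P⌋) ×ˢ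
        smoothSet P R ×ˢ smoothSet P R).filter
      (fun x : (ℤ × ℤ) × ℕ × ℕ =>
        x.1.1 ^ 3 - x.1.2 ^ 3 + (x.2.1 : ℤ) ^ 3 - (x.2.2 : ℤ) ^ 3 = k)).card := by
  rw [Rk, ← Nat.card_eq_finsetCard]
  apply Nat.card_congr
  apply Equiv.subtypeEquivRight
  intro x
  simp only [Finset.mem_filter, Finset.mem_product, Finset.mem_Icc, Int.ceil_le, Int.le_floor]
  tauto

def phFn (t : (ℕ×ℕ×ℤ×ℤ) × (ℕ×ℕ×ℤ×ℤ) × (ℕ×ℕ×ℤ×ℤ)) : ℤ × ℤ × ℤ :=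
  (kap t.1, kap t.2.1, kap t.2.2)

set_option maxHeartbeats 1000000 in
lemma count_bound (c d : Fin 3 → ℤ)
    (hD01 : c 0 * d 1 - c 1 * d 0 ≠ 0) (hD02 : c 0 * d 2 - c 2 * d 0 ≠ 0)
    (hD12 : c 1 * d 2 - c 2 * d 1 ≠ 0)
    (P R : ℝ) (hP2 : 2 ≤ P) (B : Finset ℤ)
    (hB : ∀ x ∈ B, P / 2 ≤ (x : ℝ) ∧ (x : ℝ) ≤ P) :
    (((QSet P R B ×ˢ QSet P R B ×ˢ QSet P R B).filter
        (fun t => MM c t = 0 ∧ MM d t = 0)).card : ℝ)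
      ≤ ∑ m ∈ Finset.Icc (-⌊2 * P ^ 3⌋) ⌊2 * P ^ 3⌋, (Rk P R m : ℝ) ^ 3 := by
  have hP0 : (0:ℝ) ≤ P := by linarith
  set T := (QSet P R B ×ˢ QSet P R B ×ˢ QSet P R B).filter
      (fun t => MM c t = 0 ∧ MM d t = 0) with hT
  have hsm : ∀ y : ℕ, y ∈ smoothSet P R → (1:ℝ) ≤ (y:ℝ) ∧ (y:ℝ) ≤ P := by
    intro y hy
    have h' : 1 ≤ y ∧ y ≤ ⌊P⌋₊ := by
      simpa [smoothSet, Finset.mem_filter, Finset.mem_Icc] using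
        (Finset.mem_filter.mp hy).1
    constructor
    · exact_mod_cast h'.1
    · exact le_trans (by exact_mod_cast h'.2) (Nat.floor_le hP0)
  have hQmem : ∀ q ∈ QSet P R B,
      q.1 ∈ smoothSet P R ∧ q.2.1 ∈ smoothSet P R ∧ q.2.2.1 ∈ B ∧ q.2.2.2 ∈ B := by
    intro q hq
    simpa [QSet, Finset.mem_product] using hq
  have hkapIcc : ∀ q ∈ QSet P R B, kap q ∈ Finset.Icc (-⌊2 * P ^ 3⌋) ⌊2 * P ^ 3⌋ := by
    intro q hq
    obtain ⟨hy2, hy1, hx2, hx1⟩ := hQmem q hq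
    obtain ⟨hy2a, hy2b⟩ := hsm _ hy2
    obtain ⟨hy1a, hy1b⟩ := hsm _ hy1
    obtain ⟨hx2a, hx2b⟩ := hB _ hx2
    obtain ⟨hx1a, hx1b⟩ := hB _ hx1
    have b1 : ((q.2.2.2 : ℝ)) ^ 3 ≤ P ^ 3 := pow_le_pow_left₀ (by linarith) hx1b 3
    have b2 : ((q.2.2.1 : ℝ)) ^ 3 ≤ P ^ 3 := pow_le_pow_left₀ (by linarith) hx2b 3
    have b3 : ((q.2.1 : ℝ)) ^ 3 ≤ P ^ 3 := pow_le_pow_left₀ (by linarith) hy1b 3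
    have b4 : ((q.1 : ℝ)) ^ 3 ≤ P ^ 3 := pow_le_pow_left₀ (by linarith) hy2b 3
    have n1 : (0:ℝ) ≤ ((q.2.2.2 : ℝ)) ^ 3 := pow_nonneg (by linarith) 3
    have n2 : (0:ℝ) ≤ ((q.2.2.1 : ℝ)) ^ 3 := pow_nonneg (by linarith) 3
    have n3 : (0:ℝ) ≤ ((q.2.1 : ℝ)) ^ 3 := by positivity
    have n4 : (0:ℝ) ≤ ((q.1 : ℝ)) ^ 3 := by positivity
    have hub : ((kap q : ℤ) : ℝ) ≤ 2 * P ^ 3 := by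
      simp only [kap]; push_cast; linarith
    have hlb : ((-kap q : ℤ) : ℝ) ≤ 2 * P ^ 3 := by
      simp only [kap]; push_cast; linarith
    rw [Finset.mem_Icc]
    refine ⟨?_, Int.le_floor.mpr hub⟩
    have h' := Int.le_floor.mpr hlb
    omega
  have hρRk : ∀ m : ℤ, ((QSet P R B).filter (fun q => kap q = m)).card ≤ Rk P R m := by
    intro m
    rw [Rk_eq]
    apply Finset.card_le_card_of_injOn (fun q => ((q.2.2.2, q.2.2.1), (q.2.1, q.1)))
    · intro q hq
      rw [Finset.mem_coe, Finset.mem_filter] at hq ⊢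
      obtain ⟨hqQ, hkap⟩ := hq
      obtain ⟨hy2, hy1, hx2, hx1⟩ := hQmem q hqQ
      obtain ⟨ha1, hb1⟩ := hB _ hx1
      obtain ⟨ha2, hb2⟩ := hB _ hx2
      constructor
      · simp only [Finset.mem_product, Finset.mem_Icc]
        exact ⟨⟨⟨Int.ceil_le.mpr ha1, Int.le_floor.mpr hb1⟩,
          Int.ceil_le.mpr ha2, Int.le_floor.mpr hb2⟩, hy1, hy2⟩
      · simpa [kap] using hkap
    · intro a _ b _ h
      simp only [Prod.ext_iff] at h ⊢
      tauto
  have hmemT : ∀ t, t ∈ T ↔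
      (t.1 ∈ QSet P R B ∧ t.2.1 ∈ QSet P R B ∧ t.2.2 ∈ QSet P R B) ∧
        MM c t = 0 ∧ MM d t = 0 := by
    intro t
    rw [hT, Finset.mem_filter, Finset.mem_product, Finset.mem_product, and_assoc]
  set K : Finset (ℤ × ℤ × ℤ) := T.image phFn with hKdef
  have hrels : ∀ k ∈ K, (c 2 * k.1 + c 1 * k.2.1 + c 0 * k.2.2 = 0) ∧
      (d 2 * k.1 + d 1 * k.2.1 + d 0 * k.2.2 = 0) ∧
      k.1 ∈ Finset.Icc (-⌊2 * P ^ 3⌋) ⌊2 * P ^ 3⌋ ∧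
      k.2.1 ∈ Finset.Icc (-⌊2 * P ^ 3⌋) ⌊2 * P ^ 3⌋ ∧
      k.2.2 ∈ Finset.Icc (-⌊2 * P ^ 3⌋) ⌊2 * P ^ 3⌋ := by
    intro k hk
    obtain ⟨t, ht, rfl⟩ := Finset.mem_image.mp hk
    obtain ⟨⟨hq1, hq2, hq3⟩, hMc, hMd⟩ := (hmemT t).mp ht
    exact ⟨by simpa [MM, phFn] using hMc, by simpa [MM, phFn] using hMd,
      hkapIcc _ hq1, hkapIcc _ hq2, hkapIcc _ hq3⟩
  have hEa : ∀ k ∈ K, (c 0 * d 1 - c 1 * d 0) * k.2.2 = (c 1 * d 2 - c 2 * d 1) * k.1 := by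
    intro k hk
    obtain ⟨hc', hd', -, -, -⟩ := hrels k hk
    linear_combination d 1 * hc' - c 1 * hd'
  have hEb : ∀ k ∈ K, (c 0 * d 1 - c 1 * d 0) * k.2.1 = -(c 0 * d 2 - c 2 * d 0) * k.1 := by
    intro k hk
    obtain ⟨hc', hd', -, -, -⟩ := hrels k hk
    linear_combination c 0 * hd' - d 0 * hc'
  have hEc : ∀ k ∈ K, (c 0 * d 2 - c 2 * d 0) * k.2.2 = -(c 1 * d 2 - c 2 * d 1) * k.2.1 := by
    intro k hk
    obtain ⟨hc', hd', -, -, -⟩ := hrels k hk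
    linear_combination d 2 * hc' - c 2 * hd'
  have hinj1 : ∀ a ∈ K, ∀ b ∈ K, a.1 = b.1 → a = b := by
    intro a ha b hb h
    have e3 : a.2.2 = b.2.2 := mul_left_cancel₀ hD01 (by rw [hEa a ha, hEa b hb, h])
    have e2 : a.2.1 = b.2.1 := mul_left_cancel₀ hD01 (by rw [hEb a ha, hEb b hb, h])
    rw [Prod.ext_iff, Prod.ext_iff]
    exact ⟨h, e2, e3⟩
  have hinj2 : ∀ a ∈ K, ∀ b ∈ K, a.2.1 = b.2.1 → a = b := by
    intro a ha b hb h
    have e1 : a.1 = b.1 := by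
      apply mul_left_cancel₀ (neg_ne_zero.mpr hD02)
      rw [← hEb a ha, ← hEb b hb, h]
    have e3 : a.2.2 = b.2.2 := mul_left_cancel₀ hD02 (by rw [hEc a ha, hEc b hb, h])
    rw [Prod.ext_iff, Prod.ext_iff]
    exact ⟨e1, h, e3⟩
  have hinj3 : ∀ a ∈ K, ∀ b ∈ K, a.2.2 = b.2.2 → a = b := by
    intro a ha b hb h
    have e2 : a.2.1 = b.2.1 := by
      apply mul_left_cancel₀ (neg_ne_zero.mpr hD12)
      rw [← hEc a ha, ← hEc b hb, h]
    have e1 : a.1 = b.1 := by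
      apply mul_left_cancel₀ hD12
      rw [← hEa a ha, ← hEa b hb, h]
    rw [Prod.ext_iff, Prod.ext_iff]
    exact ⟨e1, e2, h⟩
  have himg : ∀ pr : ℤ × ℤ × ℤ → ℤ, (∀ a ∈ K, ∀ b ∈ K, pr a = pr b → a = b) →
      (∀ k ∈ K, pr k ∈ Finset.Icc (-⌊2 * P ^ 3⌋) ⌊2 * P ^ 3⌋) →
      (∑ k ∈ K, (((QSet P R B).filter (fun q => kap q = pr k)).card : ℝ) ^ 3) ≤
        ∑ m ∈ Finset.Icc (-⌊2 * P ^ 3⌋) ⌊2 * P ^ 3⌋,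
          (((QSet P R B).filter (fun q => kap q = m)).card : ℝ) ^ 3 := by
    intro pr hpr hsub
    rw [← Finset.sum_image (f := fun m => (((QSet P R B).filter (fun q => kap q = m)).card : ℝ) ^ 3) hpr]
    apply Finset.sum_le_sum_of_subset_of_nonneg
    · intro m hm
      obtain ⟨k, hk, rfl⟩ := Finset.mem_image.mp hm
      exact hsub k hk
    · intro m _ _
      positivity
  have hfib : T.card = ∑ k ∈ K, (T.filter (fun t => phFn t = k)).card :=
    Finset.card_eq_sum_card_fiberwise (fun t ht => Finset.mem_image_of_mem phFn ht)
  have hfibbound : ∀ k : ℤ × ℤ × ℤ, ((T.filter (fun t => phFn t = k)).card : ℝ) ≤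
      (((QSet P R B).filter (fun q => kap q = k.1)).card : ℝ) *
        (((QSet P R B).filter (fun q => kap q = k.2.1)).card : ℝ) *
        (((QSet P R B).filter (fun q => kap q = k.2.2)).card : ℝ) := by
    intro k
    have hsub : T.filter (fun t => phFn t = k) ⊆
        ((QSet P R B).filter (fun q => kap q = k.1)) ×ˢ
          (((QSet P R B).filter (fun q => kap q = k.2.1)) ×ˢ
            ((QSet P R B).filter (fun q => kap q = k.2.2))) := by
      intro t ht
      rw [Finset.mem_filter] at ht
      obtain ⟨htT, hphk⟩ := ht
      obtain ⟨⟨hq1, hq2, hq3⟩, -, -⟩ := (hmemT t).mp htT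
      rw [← hphk]
      simp only [Finset.mem_product, Finset.mem_filter, phFn]
      exact ⟨(Finset.mem_filter.mpr ⟨hq1, rfl⟩ : t.1 ∈ (QSet P R B).filter (fun q => kap q = kap t.1)),
        (Finset.mem_filter.mpr ⟨hq2, rfl⟩ : t.2.1 ∈ (QSet P R B).filter (fun q => kap q = kap t.2.1)),
        (Finset.mem_filter.mpr ⟨hq3, rfl⟩ : t.2.2 ∈ (QSet P R B).filter (fun q => kap q = kap t.2.2))⟩
    have h2 := Finset.card_le_card hsub
    rw [Finset.card_product, Finset.card_product] at h2
    rw [mul_assoc]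
    exact_mod_cast h2
  have hSsum : (T.card : ℝ) ≤
      ∑ m ∈ Finset.Icc (-⌊2 * P ^ 3⌋) ⌊2 * P ^ 3⌋,
        (((QSet P R B).filter (fun q => kap q = m)).card : ℝ) ^ 3 := by
    have h1 : (T.card : ℝ) = ∑ k ∈ K, ((T.filter (fun t => phFn t = k)).card : ℝ) := by
      rw [hfib]; push_cast; rfl
    have h2 : ∀ k ∈ K, ((T.filter (fun t => phFn t = k)).card : ℝ) ≤
        ((((QSet P R B).filter (fun q => kap q = k.1)).card : ℝ) ^ 3 +
         (((QSet P R B).filter (fun q => kap q = k.2.1)).card : ℝ) ^ 3 +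
         (((QSet P R B).filter (fun q => kap q = k.2.2)).card : ℝ) ^ 3) / 3 := by
      intro k _
      refine le_trans (hfibbound k) ?_
      exact amgm3 _ _ _ (by positivity) (by positivity) (by positivity)
    have i1 := himg (fun k => k.1) hinj1 (fun k hk => (hrels k hk).2.2.1)
    have i2 := himg (fun k => k.2.1) hinj2 (fun k hk => (hrels k hk).2.2.2.1)
    have i3 := himg (fun k => k.2.2) hinj3 (fun k hk => (hrels k hk).2.2.2.2)
    have h3 : (∑ k ∈ K, (((((QSet P R B).filter (fun q => kap q = k.1)).card : ℝ) ^ 3 +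
         (((QSet P R B).filter (fun q => kap q = k.2.1)).card : ℝ) ^ 3 +
         (((QSet P R B).filter (fun q => kap q = k.2.2)).card : ℝ) ^ 3) / 3)) =
        ((∑ k ∈ K, (((QSet P R B).filter (fun q => kap q = k.1)).card : ℝ) ^ 3) +
         (∑ k ∈ K, (((QSet P R B).filter (fun q => kap q = k.2.1)).card : ℝ) ^ 3) +
         (∑ k ∈ K, (((QSet P R B).filter (fun q => kap q = k.2.2)).card : ℝ) ^ 3)) / 3 := by
      rw [← Finset.sum_div, Finset.sum_add_distrib, Finset.sum_add_distrib]
    calc (T.card : ℝ) = ∑ k ∈ K, ((T.filter (fun t => phFn t = k)).card : ℝ) := h1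
      _ ≤ _ := Finset.sum_le_sum h2
      _ = _ := h3
      _ ≤ _ := by linarith
  refine le_trans hSsum (Finset.sum_le_sum fun m _ => ?_)
  have h4 : (((QSet P R B).filter (fun q => kap q = m)).card : ℝ) ≤ (Rk P R m : ℝ) := by
    exact_mod_cast hρRk m
  exact pow_le_pow_left₀ (by positivity) h4 3

set_option maxHeartbeats 1000000 in
theorem twelfth_moment_diagonal_reduction (c d : Fin 3 → ℤ)
    (hcd : (c 0 * d 1 - c 1 * d 0) * (c 0 * d 2 - c 2 * d 0) * (c 1 * d 2 - c 2 * d 1) ≠ 0) :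
    ∃ C : ℝ, ∃ P0 : ℝ, ∀ P : ℝ, P0 ≤ P →
      ∀ R : ℝ, 1 ≤ R → R ≤ P →
        ∀ B : Finset ℤ, (∀ x ∈ B, P / 2 ≤ (x : ℝ) ∧ (x : ℝ) ≤ P) →
          (∫ α in (0:ℝ)..1, ∫ β in (0:ℝ)..1,
              ∏ i : Fin 3,
                ‖Fsum B ((c i : ℝ) * α + (d i : ℝ) * β)‖ ^ 2 *
                  ‖hsum P R ((c i : ℝ) * α + (d i : ℝ) * β)‖ ^ 2) ≤
            C * ∑ k ∈ Finset.Icc (-⌊2 * P ^ 3⌋) ⌊2 * P ^ 3⌋, (Rk P R k : ℝ) ^ 3 := by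
  refine ⟨1, 2, fun P hP2 R hR1 hRP B hB => ?_⟩
  obtain ⟨h12', hD12⟩ := mul_ne_zero_iff.mp hcd
  obtain ⟨hD01, hD02⟩ := mul_ne_zero_iff.mp h12'
  set TQ := QSet P R B ×ˢ QSet P R B ×ˢ QSet P R B with hTQ
  set T := TQ.filter (fun t => MM c t = 0 ∧ MM d t = 0) with hT
  have key : ((∫ α in (0:ℝ)..1, ∫ β in (0:ℝ)..1,
      ∏ i : Fin 3,
        ‖Fsum B ((c i : ℝ) * α + (d i : ℝ) * β)‖ ^ 2 *
          ‖hsum P R ((c i : ℝ) * α + (d i : ℝ) * β)‖ ^ 2 : ℝ) : ℂ)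
      = (T.card : ℂ) := by
    have h1 : ∀ α : ℝ, ((∫ β in (0:ℝ)..1,
        ∏ i : Fin 3,
          ‖Fsum B ((c i : ℝ) * α + (d i : ℝ) * β)‖ ^ 2 *
            ‖hsum P R ((c i : ℝ) * α + (d i : ℝ) * β)‖ ^ 2 : ℝ) : ℂ)
        = ∑ t ∈ TQ, ee (α * (MM c t : ℝ)) * (if MM d t = 0 then (1:ℂ) else 0) := by
      intro α
      rw [← intervalIntegral.integral_ofReal]
      have hEq : Set.EqOn
          (fun β : ℝ => ((∏ i : Fin 3,
            ‖Fsum B ((c i : ℝ) * α + (d i : ℝ) * β)‖ ^ 2 *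
              ‖hsum P R ((c i : ℝ) * α + (d i : ℝ) * β)‖ ^ 2 : ℝ) : ℂ))
          (fun β : ℝ => ∑ t ∈ TQ, ee (α * (MM c t : ℝ) + β * (MM d t : ℝ)))
          (Set.uIcc 0 1) := fun β _ => prod_expand c d P R α β B
      rw [intervalIntegral.integral_congr hEq,
        intervalIntegral.integral_finset_sum
          (fun t _ => ((ee_cont2 (α * (MM c t : ℝ)) ((MM d t : ℝ))).intervalIntegrable 0 1))]
      refine Finset.sum_congr rfl fun t _ => ?_
      have e1 : Set.EqOn (fun β : ℝ => ee (α * (MM c t : ℝ) + β * (MM d t : ℝ)))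
          (fun β : ℝ => ee (α * (MM c t : ℝ)) * ee (β * (MM d t : ℝ)))
          (Set.uIcc 0 1) := fun β _ => ee_add _ _
      rw [intervalIntegral.integral_congr e1, intervalIntegral.integral_const_mul,
        ee_int_integral]
    rw [← intervalIntegral.integral_ofReal]
    have h2 : Set.EqOn
        (fun α : ℝ => ((∫ β in (0:ℝ)..1,
          ∏ i : Fin 3,
            ‖Fsum B ((c i : ℝ) * α + (d i : ℝ) * β)‖ ^ 2 *
              ‖hsum P R ((c i : ℝ) * α + (d i : ℝ) * β)‖ ^ 2 : ℝ) : ℂ))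
        (fun α : ℝ => ∑ t ∈ TQ, ee (α * (MM c t : ℝ)) * (if MM d t = 0 then (1:ℂ) else 0))
        (Set.uIcc 0 1) := fun α _ => h1 α
    rw [intervalIntegral.integral_congr h2,
      intervalIntegral.integral_finset_sum
        (fun t _ => ((show Continuous (fun α : ℝ => ee (α * (MM c t : ℝ)) * (if MM d t = 0 then (1:ℂ) else 0)) from
          (ee_cont' ((MM c t : ℝ))).mul continuous_const).intervalIntegrable 0 1))]
    have h3 : ∀ t ∈ TQ, (∫ α in (0:ℝ)..1,
        ee (α * (MM c t : ℝ)) * (if MM d t = 0 then (1:ℂ) else 0))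
        = (if MM c t = 0 ∧ MM d t = 0 then (1:ℂ) else 0) := by
      intro t _
      rw [intervalIntegral.integral_mul_const, ee_int_integral]
      split_ifs with h' h'' h'' <;> simp_all
    rw [Finset.sum_congr rfl h3, Finset.sum_boole]
  have LHSeq : (∫ α in (0:ℝ)..1, ∫ β in (0:ℝ)..1,
      ∏ i : Fin 3,
        ‖Fsum B ((c i : ℝ) * α + (d i : ℝ) * β)‖ ^ 2 *
          ‖hsum P R ((c i : ℝ) * α + (d i : ℝ) * β)‖ ^ 2)
      = (T.card : ℝ) := by exact_mod_cast key
  rw [LHSeq, one_mul]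
  exact count_bound c d hD01 hD02 hD12 P R hP2 B hB
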